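/- Let the type X be one of G2, F4, E7, E8, with rank l equal to 2, 4, 7, 8 and Coxeter number h equal to 6, 12, 18, 30 respectively. For nonempty subsets J and J′ of {0,1,…,l} inducing connected subgraphs of the extended Dynkin diagram of type X, if 0 ∈ J and 0 ∉ J′, then the height (sum of coefficients) of φ(J) is at least h − l − 1, the height of φ(J′) is at most l, and h − l − 1 > l; consequently φ(J) ≠ φ(J′). -/

import Mathlib

/-! Height separation for the map `φ` on connected subsets of the extended Dynkin
diagrams of types `G₂`, `F₄`, `E₇`, `E₈` (rank `l` = 2, 4, 7, 8 and Coxeter number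
`h` = 6, 12, 18, 30 respectively). -/

/-- The simple root `αᵢ` (for `1 ≤ i ≤ l`) as a coefficient vector; node `0`
(the affine node) is sent to `0`. -/
def simpleRoot (l : ℕ) (i : Fin (l + 1)) : Fin l → ℤ :=
  fun j => if (i : ℕ) = (j : ℕ) + 1 then 1 else 0

/-- The map `φ`: `φ(J) = Σ_{i∈J} αᵢ` if `0 ∉ J`, and
`φ(J) = α̃₀ − Σ_{i∈J, i≠0} αᵢ` if `0 ∈ J`, where `hr` is the highest root. -/
def phiMap (l : ℕ) (hr : Fin l → ℤ) (J : Finset (Fin (l + 1))) : Fin l → ℤ :=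
  if 0 ∈ J then hr - ∑ i ∈ J.erase 0, simpleRoot l i
  else ∑ i ∈ J, simpleRoot l i

/-- The height of a vector: the sum of its coefficients. -/
def height (l : ℕ) (v : Fin l → ℤ) : ℤ := ∑ j, v j

def G2Highest : Fin 2 → ℤ := ![3, 2]
def G2ExtGraph : SimpleGraph (Fin 3) :=
  SimpleGraph.fromEdgeSet {s(1,2), s(2,0)}

def F4Highest : Fin 4 → ℤ := ![2, 3, 4, 2]
def F4ExtGraph : SimpleGraph (Fin 5) :=
  SimpleGraph.fromEdgeSet {s(0,1), s(1,2), s(2,3), s(3,4)}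

def E7Highest : Fin 7 → ℤ := ![2, 2, 3, 4, 3, 2, 1]
def E7ExtGraph : SimpleGraph (Fin 8) :=
  SimpleGraph.fromEdgeSet {s(0,1), s(1,3), s(3,4), s(4,5), s(5,6), s(6,7), s(2,4)}

def E8Highest : Fin 8 → ℤ := ![2, 3, 4, 6, 5, 4, 3, 2]
def E8ExtGraph : SimpleGraph (Fin 9) :=
  SimpleGraph.fromEdgeSet {s(1,3), s(3,4), s(4,5), s(5,6), s(6,7), s(7,8), s(2,4), s(0,8)}


lemma height_simpleRoot_ne (l : ℕ) (i : Fin (l + 1)) (hi : (i : ℕ) ≠ 0) :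
    height l (simpleRoot l i) = 1 := by
  have h1 : (i : ℕ) - 1 < l := by have := i.isLt; omega
  unfold height simpleRoot
  rw [Finset.sum_eq_single (⟨(i : ℕ) - 1, h1⟩ : Fin l)]
  · simp; omega
  · intro j _ hj
    have : (i : ℕ) ≠ (j : ℕ) + 1 := by
      intro h; apply hj; apply Fin.ext; simp; omega
    simp [this]
  · intro h; exact absurd (Finset.mem_univ _) h

lemma height_sum (l : ℕ) (s : Finset (Fin (l + 1))) (f : Fin (l + 1) → Fin l → ℤ) :
    height l (∑ i ∈ s, f i) = ∑ i ∈ s, height l (f i) := by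
  unfold height
  simp only [Finset.sum_apply]
  rw [Finset.sum_comm]

lemma height_sub (l : ℕ) (a b : Fin l → ℤ) :
    height l (a - b) = height l a - height l b := by
  unfold height; simp [Finset.sum_sub_distrib]

lemma main_lemma (l : ℕ) (hr : Fin l → ℤ) (h : ℤ) (hhr : height l hr = h - 1)
    (hgap : (l : ℤ) < h - l - 1)
    (J J' : Finset (Fin (l + 1))) (h0 : 0 ∈ J) (h0' : 0 ∉ J') :
    h - l - 1 ≤ height l (phiMap l hr J) ∧
    height l (phiMap l hr J') ≤ (l : ℤ) ∧
    (l : ℤ) < h - l - 1 ∧ phiMap l hr J ≠ phiMap l hr J' := by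
  have hJ : height l (phiMap l hr J) = height l hr - (J.erase 0).card := by
    rw [phiMap, if_pos h0, height_sub, height_sum]
    have : ∀ i ∈ J.erase 0, height l (simpleRoot l i) = 1 := by
      intro i hi
      exact height_simpleRoot_ne l i (by
        have := Finset.ne_of_mem_erase hi
        exact fun hz => this (Fin.ext (by simpa using hz)))
    rw [Finset.sum_congr rfl this]
    simp
  have hc1 : (J.erase 0).card ≤ l := by
    have hsub : J.erase 0 ⊆ Finset.univ.erase 0 :=
      Finset.erase_subset_erase _ (Finset.subset_univ J)
    have := Finset.card_le_card hsub
    simpa using this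
  have hJ' : height l (phiMap l hr J') = J'.card := by
    rw [phiMap, if_neg h0', height_sum]
    have : ∀ i ∈ J', height l (simpleRoot l i) = 1 := by
      intro i hi
      refine height_simpleRoot_ne l i ?_
      intro hz
      exact h0' (by rwa [show i = 0 from Fin.ext (by simpa using hz)] at hi)
    rw [Finset.sum_congr rfl this]
    simp
  have hc2 : J'.card ≤ l := by
    have hsub : J' ⊆ Finset.univ.erase 0 :=
      Finset.subset_erase.mpr ⟨Finset.subset_univ _, h0'⟩
    have := Finset.card_le_card hsub
    simpa using this
  have hc1' : ((J.erase 0).card : ℤ) ≤ l := by exact_mod_cast hc1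
  have hc2' : (J'.card : ℤ) ≤ l := by exact_mod_cast hc2
  refine ⟨by rw [hJ, hhr]; linarith, by rw [hJ']; exact hc2', hgap, ?_⟩
  intro heq
  have := congrArg (height l) heq
  rw [hJ, hJ', hhr] at this
  linarith

/-- In types `G₂`, `F₄`, `E₇`, `E₈`: for nonempty connected induced subsets `J`, `J′`
of the extended Dynkin diagram with `0 ∈ J` and `0 ∉ J′`, the height of `φ(J)` is at
least `h − l − 1`, the height of `φ(J′)` is at most `l`, `h − l − 1 > l`, and hence
`φ(J) ≠ φ(J′)`. -/
theorem phi_height_separation :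
    (∀ J J' : Finset (Fin 3), J.Nonempty →
      (G2ExtGraph.induce (J : Set (Fin 3))).Connected → J'.Nonempty →
      (G2ExtGraph.induce (J' : Set (Fin 3))).Connected → 0 ∈ J → 0 ∉ J' →
      (6 - 2 - 1 : ℤ) ≤ height 2 (phiMap 2 G2Highest J) ∧
      height 2 (phiMap 2 G2Highest J') ≤ (2 : ℤ) ∧
      (2 : ℤ) < 6 - 2 - 1 ∧ phiMap 2 G2Highest J ≠ phiMap 2 G2Highest J') ∧
    (∀ J J' : Finset (Fin 5), J.Nonempty →
      (F4ExtGraph.induce (J : Set (Fin 5))).Connected → J'.Nonempty →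
      (F4ExtGraph.induce (J' : Set (Fin 5))).Connected → 0 ∈ J → 0 ∉ J' →
      (12 - 4 - 1 : ℤ) ≤ height 4 (phiMap 4 F4Highest J) ∧
      height 4 (phiMap 4 F4Highest J') ≤ (4 : ℤ) ∧
      (4 : ℤ) < 12 - 4 - 1 ∧ phiMap 4 F4Highest J ≠ phiMap 4 F4Highest J') ∧
    (∀ J J' : Finset (Fin 8), J.Nonempty →
      (E7ExtGraph.induce (J : Set (Fin 8))).Connected → J'.Nonempty →
      (E7ExtGraph.induce (J' : Set (Fin 8))).Connected → 0 ∈ J → 0 ∉ J' →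
      (18 - 7 - 1 : ℤ) ≤ height 7 (phiMap 7 E7Highest J) ∧
      height 7 (phiMap 7 E7Highest J') ≤ (7 : ℤ) ∧
      (7 : ℤ) < 18 - 7 - 1 ∧ phiMap 7 E7Highest J ≠ phiMap 7 E7Highest J') ∧
    (∀ J J' : Finset (Fin 9), J.Nonempty →
      (E8ExtGraph.induce (J : Set (Fin 9))).Connected → J'.Nonempty →
      (E8ExtGraph.induce (J' : Set (Fin 9))).Connected → 0 ∈ J → 0 ∉ J' →
      (30 - 8 - 1 : ℤ) ≤ height 8 (phiMap 8 E8Highest J) ∧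
      height 8 (phiMap 8 E8Highest J') ≤ (8 : ℤ) ∧
      (8 : ℤ) < 30 - 8 - 1 ∧ phiMap 8 E8Highest J ≠ phiMap 8 E8Highest J')  := by
  refine ⟨?_, ?_, ?_, ?_⟩
  · intro J J' _ _ _ _ h0 h0'
    have H := main_lemma 2 G2Highest 6 (by decide) (by norm_num) J J' h0 h0'
    norm_num at H ⊢
    exact H
  · intro J J' _ _ _ _ h0 h0'
    have H := main_lemma 4 F4Highest 12 (by decide) (by norm_num) J J' h0 h0'
    norm_num at H ⊢
    exact H
  · intro J J' _ _ _ _ h0 h0'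
    have H := main_lemma 7 E7Highest 18 (by decide) (by norm_num) J J' h0 h0'
    norm_num at H ⊢
    exact H
  · intro J J' _ _ _ _ h0 h0'
    have H := main_lemma 8 E8Highest 30 (by decide) (by norm_num) J J' h0 h0'
    norm_num at H ⊢
    exact H
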